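/- Determinant norm-comparison lemma: if A and B are d×d positive definite real matrices with A ⪰ B (i.e., A − B is positive semidefinite), then for every x ∈ ℝ^d, ‖x‖_A ≤ ‖x‖_B · √(det(A)/det(B)). -/

import Mathlib

open Matrix

/-- `√(vᵀ A v)`, the (semi-)norm of `v` induced by a positive definite matrix `A`. -/
noncomputable def matNorm {d : ℕ} (A : Matrix (Fin d) (Fin d) ℝ) (v : Fin d → ℝ) : ℝ :=
  Real.sqrt (v ⬝ᵥ (A *ᵥ v))


lemma key {d : ℕ} (C : Matrix (Fin d) (Fin d) ℝ) (hC : C.IsHermitian)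
    (h1 : (C - 1).PosSemidef) (x : Fin d → ℝ) :
    x ⬝ᵥ (C *ᵥ x) ≤ C.det * (x ⬝ᵥ x) := by
  classical
  set U : Matrix (Fin d) (Fin d) ℝ := (hC.eigenvectorUnitary : Matrix (Fin d) (Fin d) ℝ)
  set μ : Fin d → ℝ := hC.eigenvalues
  -- eigenvalues ≥ 1
  have hμ1 : ∀ i, 1 ≤ μ i := by
    intro i
    set v : Fin d → ℝ := ⇑(hC.eigenvectorBasis i)
    have hv0 : v ≠ 0 := fun h => hC.eigenvectorBasis.orthonormal.ne_zero i (by ext j; exact congrFun h j)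
    have hvv : 0 < v ⬝ᵥ v := by
      have : v ⬝ᵥ v = ∑ j, v j ^ 2 := by simp [dotProduct, sq]
      rw [this]
      apply Finset.sum_pos' (fun j _ => sq_nonneg _)
      obtain ⟨j, hj⟩ := Function.ne_iff.mp hv0
      exact ⟨j, Finset.mem_univ _, by simpa [sq] using mul_self_pos.mpr hj⟩
    have hps := h1.dotProduct_mulVec_nonneg v
    have heig : (C - 1) *ᵥ v = (μ i - 1) • v := by
      rw [sub_mulVec, hC.mulVec_eigenvectorBasis, one_mulVec, sub_smul, one_smul]
    rw [heig] at hps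
    simp only [star_trivial, dotProduct_smul, smul_eq_mul] at hps
    nlinarith
  have hdet : C.det = ∏ i, μ i := by
    have := hC.det_eq_prod_eigenvalues
    simpa using this
  -- change of variables
  set y : Fin d → ℝ := star U *ᵥ x with hy
  have hU : U ∈ Matrix.unitaryGroup (Fin d) ℝ := hC.eigenvectorUnitary.2
  have hUU : U * star U = 1 := (Matrix.mem_unitaryGroup_iff).mp hU
  have hstarU : star U = Uᵀ := by
    ext i j; simp [star]
  have hxy : x ᵥ* U = y := by
    ext j
    simp [hy, hstarU, vecMul, mulVec, dotProduct, transpose_apply, mul_comm]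
  have hquad : x ⬝ᵥ (C *ᵥ x) = ∑ i, μ i * y i ^ 2 := by
    conv_lhs => rw [hC.spectral_theorem]
    simp only [Unitary.conjStarAlgAut_apply, Unitary.coe_star]
    rw [← mulVec_mulVec, ← mulVec_mulVec, dotProduct_mulVec, hxy]
    simp only [dotProduct, mulVec_diagonal]
    refine Finset.sum_congr rfl fun i _ => ?_
    simp [sq]; ring
  have hxx : x ⬝ᵥ x = ∑ i, y i ^ 2 := by
    have h2 : x ⬝ᵥ x = x ⬝ᵥ ((U * star U) *ᵥ x) := by rw [hUU, one_mulVec]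
    rw [h2, ← mulVec_mulVec, dotProduct_mulVec, hxy, ← hy]
    simp [dotProduct, sq]
  rw [hquad, hxx, hdet, Finset.mul_sum]
  apply Finset.sum_le_sum
  intro i _
  have herase : (1:ℝ) ≤ ∏ j ∈ Finset.univ.erase i, μ j :=
    Finset.prod_induction μ (fun r => (1:ℝ) ≤ r) (fun a b ha hb => by nlinarith) le_rfl (fun j _ => hμ1 j)
  have : μ i ≤ ∏ j, μ j := by
    rw [← Finset.mul_prod_erase Finset.univ μ (Finset.mem_univ i)]
    exact le_mul_of_one_le_right (by linarith [hμ1 i]) herase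
  nlinarith [sq_nonneg (y i), hμ1 i]

open scoped MatrixOrder in
/-- Determinant norm-comparison lemma. -/
theorem statement16 {d : ℕ} (A B : Matrix (Fin d) (Fin d) ℝ)
    (hA : A.PosDef) (hB : B.PosDef) (hAB : (A - B).PosSemidef) (x : Fin d → ℝ) :
    matNorm A x ≤ matNorm B x * Real.sqrt (A.det / B.det) := by
  classical
  set S : Matrix (Fin d) (Fin d) ℝ := CFC.sqrt B with hSdef
  have hSpsd : S.PosSemidef := (CFC.sqrt_nonneg B).posSemidef
  have hSH : S.IsHermitian := hSpsd.1
  have hSS : S * S = B := CFC.sqrt_mul_sqrt_self B hB.posSemidef.nonneg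
  have hdetB : 0 < B.det := hB.det_pos
  have hdetS : S.det ≠ 0 := by
    intro h
    rw [← hSS, det_mul, h, mul_zero] at hdetB
    exact lt_irrefl _ hdetB
  have hSunit : IsUnit S.det := isUnit_iff_ne_zero.mpr hdetS
  set T : Matrix (Fin d) (Fin d) ℝ := S⁻¹ with hTdef
  have hST : S * T = 1 := mul_nonsing_inv S hSunit
  have hTS : T * S = 1 := nonsing_inv_mul S hSunit
  have hTH : T.IsHermitian := by
    rw [IsHermitian, hTdef, conjTranspose_nonsing_inv, hSH.eq]
  set C : Matrix (Fin d) (Fin d) ℝ := T * A * T with hCdef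
  have hCH : C.IsHermitian := by
    have := isHermitian_conjTranspose_mul_mul T hA.1
    rwa [hTH.eq] at this
  have hC1 : (C - 1).PosSemidef := by
    have h := hAB.conjTranspose_mul_mul_same T
    rw [hTH.eq] at h
    have heq : T * (A - B) * T = C - 1 := by
      rw [Matrix.mul_sub, Matrix.sub_mul, hCdef, ← hSS]
      congr 1
      rw [← Matrix.mul_assoc T S S, hTS, Matrix.one_mul, hST]
    rwa [heq] at h
  have hSt : Sᵀ = S := hSH.eq
  have hconj : ∀ M : Matrix (Fin d) (Fin d) ℝ,
      (S *ᵥ x) ⬝ᵥ (M *ᵥ (S *ᵥ x)) = x ⬝ᵥ ((S * M * S) *ᵥ x) := by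
    intro M
    rw [mulVec_mulVec, show S *ᵥ x = x ᵥ* Sᵀ from (vecMul_transpose S x).symm,
      ← dotProduct_mulVec, mulVec_mulVec, hSt, ← Matrix.mul_assoc]
  have hkey := key C hCH hC1 (S *ᵥ x)
  have hqA : (S *ᵥ x) ⬝ᵥ (C *ᵥ (S *ᵥ x)) = x ⬝ᵥ (A *ᵥ x) := by
    rw [hconj]
    congr 2
    rw [hCdef, ← Matrix.mul_assoc S (T*A) T, ← Matrix.mul_assoc S T A, hST,
      Matrix.one_mul, Matrix.mul_assoc A T S, hTS, Matrix.mul_one]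
  have hqB : (S *ᵥ x) ⬝ᵥ (S *ᵥ x) = x ⬝ᵥ (B *ᵥ x) := by
    have := hconj 1
    rwa [Matrix.mul_one, hSS, one_mulVec] at this
  have hdetC : C.det = A.det / B.det := by
    rw [hCdef, det_mul, det_mul, det_nonsing_inv, ← hSS, det_mul, Ring.inverse_eq_inv]
    field_simp
  rw [hqA, hqB, hdetC] at hkey
  have hBx : 0 ≤ x ⬝ᵥ (B *ᵥ x) := by simpa using hB.posSemidef.dotProduct_mulVec_nonneg x
  have hdd : 0 ≤ A.det / B.det := div_nonneg hA.det_pos.le hdetB.le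
  rw [matNorm, matNorm, ← Real.sqrt_mul hBx, mul_comm (x ⬝ᵥ (B *ᵥ x))]
  exact Real.sqrt_le_sqrt hkey
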